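/- For every ε > 0, there exists N ∈ ℕ with N ≤ 4/ε + 4 such that every homeomorphism h of the closed unit disc 𝔻 ⊂ ℝ² that restricts to the identity on the boundary circle ∂𝔻 can be written as a product h = h_N ∘ ⋯ ∘ h₁ of N homeomorphisms of 𝔻, each equal to the identity on ∂𝔻 and each satisfying sup_{x ∈ 𝔻} d(h_i(x), x) < ε. -/

import Mathlib

open Metric

noncomputable section
namespace Stmt9


abbrev E := EuclideanSpace ℝ (Fin 2)
abbrev D : Set E := Metric.closedBall (0 : E) 1

instance : CompactSpace D := isCompact_iff_compactSpace.mp (isCompact_closedBall (0:E) 1)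

lemma normD (x : D) : ‖(x : E)‖ ≤ 1 := mem_closedBall_zero_iff.mp x.2

lemma normD_nonneg (x : D) : (0:ℝ) ≤ ‖(x : E)‖ := norm_nonneg _

/-- Radial self-map constructor. -/
def radialFun (ν : ℝ → ℝ) (hle : ∀ r, 0 ≤ r → r ≤ 1 → ν r ≤ 1)
    (hpos : ∀ r, 0 ≤ r → r ≤ 1 → 0 < ν r) : D → D := fun x =>
  ⟨ν ‖(x:E)‖ • (x:E), by
    rw [mem_closedBall_zero_iff, norm_smul, Real.norm_eq_abs,
      abs_of_pos (hpos _ (norm_nonneg _) (normD x))]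
    calc ν ‖(x:E)‖ * ‖(x:E)‖ ≤ 1 * 1 := by
          have := hle _ (norm_nonneg _) (normD x)
          have := hpos _ (norm_nonneg _) (normD x)
          have := normD x
          nlinarith [norm_nonneg (x:E)]
      _ = 1 := by ring⟩

lemma radialFun_bijective (ν : ℝ → ℝ) (hle : ∀ r, 0 ≤ r → r ≤ 1 → ν r ≤ 1)
    (hpos : ∀ r, 0 ≤ r → r ≤ 1 → 0 < ν r) (hcont : Continuous ν)
    (hmono : ∀ ⦃r s⦄, 0 ≤ r → r ≤ s → s ≤ 1 → ν r ≤ ν s) (h1 : ν 1 = 1) :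
    Function.Bijective (radialFun ν hle hpos) := by
  have hsm : ∀ ⦃r s : ℝ⦄, 0 ≤ r → r ≤ 1 → 0 ≤ s → s ≤ 1 → r * ν r = s * ν s → r = s := by
    intro r s hr hr1 hs hs1 hrs
    rcases lt_trichotomy r s with hlt | he | hlt
    · exfalso
      have h1' : r * ν r < s * ν r := by
        have := hpos r hr hr1; nlinarith
      have h2' : s * ν r ≤ s * ν s := by
        have := hmono hr (le_of_lt hlt) hs1
        nlinarith
      linarith
    · exact he
    · exfalso
      have h1' : s * ν s < r * ν s := by
        have := hpos s hs hs1; nlinarith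
      have h2' : r * ν s ≤ r * ν r := by
        have := hmono hs (le_of_lt hlt) hr1
        nlinarith
      linarith
  constructor
  · intro x y hxy
    have hco : ν ‖(x:E)‖ • (x:E) = ν ‖(y:E)‖ • (y:E) := congrArg Subtype.val hxy
    have hnorm : ‖(x:E)‖ * ν ‖(x:E)‖ = ‖(y:E)‖ * ν ‖(y:E)‖ := by
      have := congrArg norm hco
      rw [norm_smul, norm_smul, Real.norm_eq_abs, Real.norm_eq_abs,
        abs_of_pos (hpos _ (norm_nonneg _) (normD x)),
        abs_of_pos (hpos _ (norm_nonneg _) (normD y))] at this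
      linarith [this]
    have heq : ‖(x:E)‖ = ‖(y:E)‖ :=
      hsm (norm_nonneg _) (normD x) (norm_nonneg _) (normD y) hnorm
    rw [heq] at hco
    have := smul_right_injective E (ne_of_gt (hpos _ (norm_nonneg _) (normD y)))
    exact Subtype.ext (this hco)
  · intro y
    have hy1 : ‖(y:E)‖ ∈ Set.Icc ((fun r => r * ν r) 0) ((fun r => r * ν r) 1) := by
      simp only [zero_mul, h1, mul_one]
      exact ⟨norm_nonneg _, normD y⟩
    obtain ⟨r, ⟨hr0, hr1⟩, hr⟩ := intermediate_value_Icc (by norm_num : (0:ℝ) ≤ 1)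
      ((continuous_id.mul hcont).continuousOn) hy1
    have hr : r * ν r = ‖(y:E)‖ := hr
    by_cases hy0 : (y : E) = 0
    · refine ⟨⟨0, by simp [mem_closedBall_zero_iff]⟩, ?_⟩
      apply Subtype.ext
      simp [radialFun, hy0]
    · have hyn : ‖(y:E)‖ ≠ 0 := by simpa using hy0
      refine ⟨⟨(r / ‖(y:E)‖) • (y:E), ?_⟩, ?_⟩
      · rw [mem_closedBall_zero_iff, norm_smul, Real.norm_eq_abs,
          abs_of_nonneg (div_nonneg hr0 (norm_nonneg _))]
        field_simp
        exact hr1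
      · apply Subtype.ext
        show ν ‖(r / ‖(y:E)‖) • (y:E)‖ • ((r / ‖(y:E)‖) • (y:E)) = (y:E)
        have hnr : ‖(r / ‖(y:E)‖) • (y:E)‖ = r := by
          rw [norm_smul, Real.norm_eq_abs, abs_of_nonneg (div_nonneg hr0 (norm_nonneg _))]
          field_simp
        rw [hnr, smul_smul]
        have : ν r * (r / ‖(y:E)‖) = 1 / ‖(y:E)‖ * (r * ν r) := by ring
        rw [this, hr, one_div]
        rw [inv_mul_cancel₀ hyn, one_smul]

def radialHomeo (ν : ℝ → ℝ) (hle : ∀ r, 0 ≤ r → r ≤ 1 → ν r ≤ 1)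
    (hpos : ∀ r, 0 ≤ r → r ≤ 1 → 0 < ν r) (hcont : Continuous ν)
    (hmono : ∀ ⦃r s⦄, 0 ≤ r → r ≤ s → s ≤ 1 → ν r ≤ ν s) (h1 : ν 1 = 1) : D ≃ₜ D := by
  refine Continuous.homeoOfEquivCompactToT2
    (f := Equiv.ofBijective _ (radialFun_bijective ν hle hpos hcont hmono h1)) ?_
  show Continuous (radialFun ν hle hpos)
  apply Continuous.subtype_mk
  exact ((hcont.comp (continuous_norm.comp continuous_subtype_val)).smul continuous_subtype_val)

@[simp] lemma radialHomeo_apply (ν : ℝ → ℝ) (hle : ∀ r, 0 ≤ r → r ≤ 1 → ν r ≤ 1)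
    (hpos : ∀ r, 0 ≤ r → r ≤ 1 → 0 < ν r) (hcont : Continuous ν)
    (hmono : ∀ ⦃r s⦄, 0 ≤ r → r ≤ s → s ≤ 1 → ν r ≤ ν s) (h1 : ν 1 = 1) (x : D) :
    ((radialHomeo ν hle hpos hcont hmono h1 x : D) : E) = ν ‖(x:E)‖ • (x:E) := rfl


/-- retraction onto the closed unit ball -/
def projD (y : E) : D := ⟨(1 / max 1 ‖y‖) • y, by
  rw [mem_closedBall_zero_iff, norm_smul, Real.norm_eq_abs]
  have h1 : (0:ℝ) < max 1 ‖y‖ := lt_of_lt_of_le one_pos (le_max_left _ _)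
  rw [abs_of_pos (by positivity)]
  rw [div_mul_eq_mul_div, one_mul, div_le_one h1]
  exact le_max_right _ _⟩

lemma projD_coe (y : E) (hy : ‖y‖ ≤ 1) : (projD y : E) = y := by
  simp only [projD, max_eq_left hy, div_one, one_smul]

lemma projD_cont : Continuous projD := by
  apply Continuous.subtype_mk
  refine Continuous.smul (f := fun y : E => 1 / max 1 ‖y‖) (g := fun y : E => y) ?_ continuous_id
  exact continuous_const.div (continuous_const.max continuous_norm)
    (fun y => ne_of_gt (lt_of_lt_of_le one_pos (le_max_left _ _)))

variable (h : D ≃ₜ D) (t : ℝ)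

def KE (y : E) : E := if ‖y‖ ≤ t then t • ((h (projD (t⁻¹ • y))) : E) else y

lemma KE_cont (ht0 : 0 < t) (hbd : ∀ x : D, ‖(x:E)‖ = 1 → h x = x) :
    Continuous (KE h t) := by
  apply Continuous.if_le
  · exact Continuous.smul (f := fun _ : E => t) (g := fun y : E => ((h (projD (t⁻¹ • y))) : E)) continuous_const (continuous_subtype_val.comp
      (h.continuous.comp (projD_cont.comp (Continuous.smul (f := fun _ : E => t⁻¹) (g := fun y : E => y) continuous_const continuous_id : Continuous fun y : E => t⁻¹ • y))))
  · exact continuous_id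
  · exact continuous_norm
  · exact continuous_const
  · intro y hy
    have hn : ‖t⁻¹ • y‖ = 1 := by
      rw [norm_smul, Real.norm_eq_abs, abs_of_pos (inv_pos.mpr ht0), hy,
        inv_mul_cancel₀ (ne_of_gt ht0)]
    have hp : (projD (t⁻¹ • y) : E) = t⁻¹ • y := projD_coe _ (le_of_eq hn)
    have : h (projD (t⁻¹ • y)) = projD (t⁻¹ • y) := by
      apply hbd; rw [hp, hn]
    rw [this, hp, smul_smul, mul_inv_cancel₀ (ne_of_gt ht0), one_smul]

lemma KE_mem (y : E) (ht0 : 0 < t) (ht1 : t ≤ 1) (hy : ‖y‖ ≤ 1) : KE h t y ∈ D := by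
  rw [mem_closedBall_zero_iff]
  unfold KE
  split_ifs with hc
  · rw [norm_smul, Real.norm_eq_abs, abs_of_pos ht0]
    calc t * ‖(h (projD (t⁻¹ • y)) : E)‖ ≤ t * 1 :=
          mul_le_mul_of_nonneg_left (normD _) (le_of_lt ht0)
      _ ≤ 1 := by linarith
  · exact hy

def alexFun (ht0 : 0 < t) (ht1 : t ≤ 1) : D → D := fun x => ⟨KE h t x, KE_mem h t x ht0 ht1 (normD x)⟩

lemma alexFun_coe_of_le (ht0 : 0 < t) (ht1 : t ≤ 1) (x : D) (hx : ‖(x:E)‖ ≤ t) :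
    (alexFun h t ht0 ht1 x : E) = t • ((h ⟨t⁻¹ • (x:E), by
      rw [mem_closedBall_zero_iff, norm_smul, Real.norm_eq_abs, abs_of_pos (inv_pos.mpr ht0)]
      calc t⁻¹ * ‖(x:E)‖ ≤ t⁻¹ * t := by
            exact mul_le_mul_of_nonneg_left hx (le_of_lt (inv_pos.mpr ht0))
        _ = 1 := inv_mul_cancel₀ (ne_of_gt ht0)⟩) : E) := by
  show KE h t x = _
  unfold KE
  rw [if_pos hx]
  have hmem : t⁻¹ • (x:E) ∈ D := by
    rw [mem_closedBall_zero_iff, norm_smul, Real.norm_eq_abs, abs_of_pos (inv_pos.mpr ht0)]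
    calc t⁻¹ * ‖(x:E)‖ ≤ t⁻¹ * t :=
          mul_le_mul_of_nonneg_left hx (le_of_lt (inv_pos.mpr ht0))
      _ = 1 := inv_mul_cancel₀ (ne_of_gt ht0)
  have hp : projD (t⁻¹ • (x:E)) = ⟨t⁻¹ • (x:E), hmem⟩ := by
    apply Subtype.ext
    exact projD_coe _ (mem_closedBall_zero_iff.mp hmem)
  rw [hp]

lemma alexFun_coe_of_gt (ht0 : 0 < t) (ht1 : t ≤ 1) (x : D) (hx : ¬ ‖(x:E)‖ ≤ t) :
    (alexFun h t ht0 ht1 x : E) = (x : E) := by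
  show KE h t x = _
  unfold KE
  rw [if_neg hx]

lemma alexFun_inv (ht0 : 0 < t) (ht1 : t ≤ 1) (x : D) :
    alexFun h.symm t ht0 ht1 (alexFun h t ht0 ht1 x) = x := by
  by_cases hx : ‖(x:E)‖ ≤ t
  · have hz : t⁻¹ • (x:E) ∈ D := by
      rw [mem_closedBall_zero_iff, norm_smul, Real.norm_eq_abs, abs_of_pos (inv_pos.mpr ht0)]
      calc t⁻¹ * ‖(x:E)‖ ≤ t⁻¹ * t :=
            mul_le_mul_of_nonneg_left hx (le_of_lt (inv_pos.mpr ht0))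
        _ = 1 := inv_mul_cancel₀ (ne_of_gt ht0)
    set z : D := ⟨t⁻¹ • (x:E), hz⟩ with hzdef
    have h1 : (alexFun h t ht0 ht1 x : E) = t • ((h z : E)) := alexFun_coe_of_le h t ht0 ht1 x hx
    have hnorm1 : ‖(alexFun h t ht0 ht1 x : E)‖ ≤ t := by
      rw [h1, norm_smul, Real.norm_eq_abs, abs_of_pos ht0]
      calc t * ‖(h z : E)‖ ≤ t * 1 := mul_le_mul_of_nonneg_left (normD _) (le_of_lt ht0)
        _ = t := mul_one t
    have h2 := alexFun_coe_of_le h.symm t ht0 ht1 (alexFun h t ht0 ht1 x) hnorm1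
    apply Subtype.ext
    rw [h2]
    have key : ∀ w : D, (w:E) = (h z : E) → t • ((h.symm w : E)) = (x:E) := by
      intro w hw
      have hw' : w = h z := Subtype.ext hw
      rw [hw', Homeomorph.symm_apply_apply]
      show t • (t⁻¹ • (x:E)) = (x:E)
      rw [smul_smul, mul_inv_cancel₀ (ne_of_gt ht0), one_smul]
    apply key
    show t⁻¹ • ((alexFun h t ht0 ht1 x : D) : E) = (h z : E)
    rw [h1, smul_smul, inv_mul_cancel₀ (ne_of_gt ht0), one_smul]
  · have h1 := alexFun_coe_of_gt h t ht0 ht1 x hx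
    have hx' : ¬ ‖(alexFun h t ht0 ht1 x : E)‖ ≤ t := by rw [h1]; exact hx
    apply Subtype.ext
    rw [alexFun_coe_of_gt h.symm t ht0 ht1 _ hx', h1]

def alexHomeo (ht0 : 0 < t) (ht1 : t ≤ 1) (hbd : ∀ x : D, ‖(x:E)‖ = 1 → h x = x)
    (hbd' : ∀ x : D, ‖(x:E)‖ = 1 → h.symm x = x) : D ≃ₜ D where
  toFun := alexFun h t ht0 ht1
  invFun := alexFun h.symm t ht0 ht1
  left_inv := alexFun_inv h t ht0 ht1
  right_inv := by
    intro x
    have := alexFun_inv h.symm t ht0 ht1 x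
    rwa [Homeomorph.symm_symm] at this
  continuous_toFun := by
    apply Continuous.subtype_mk
    exact (KE_cont h t ht0 hbd).comp continuous_subtype_val
  continuous_invFun := by
    apply Continuous.subtype_mk
    exact (KE_cont h.symm t ht0 hbd').comp continuous_subtype_val


@[simp] lemma alexHomeo_apply (h : D ≃ₜ D) (t : ℝ) (ht0 : 0 < t) (ht1 : t ≤ 1)
    (hbd : ∀ x : D, ‖(x:E)‖ = 1 → h x = x)
    (hbd' : ∀ x : D, ‖(x:E)‖ = 1 → h.symm x = x) (x : D) :
    alexHomeo h t ht0 ht1 hbd hbd' x = alexFun h t ht0 ht1 x := rfl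

end Stmt9
end
set_option maxHeartbeats 2000000 in
open Stmt9 in
/-- Every homeomorphism of the closed disc fixing the boundary pointwise is a
composition of N boundary-fixing homeomorphisms ε-close to the identity,
with N ≤ 4/ε + 4. -/
theorem stmt_9 (ε : ℝ) (hε : 0 < ε) :
    ∃ N : ℕ, (N : ℝ) ≤ 4 / ε + 4 ∧
      ∀ h : (Metric.closedBall (0 : EuclideanSpace ℝ (Fin 2)) 1) ≃ₜ
            (Metric.closedBall (0 : EuclideanSpace ℝ (Fin 2)) 1),
        (∀ x : Metric.closedBall (0 : EuclideanSpace ℝ (Fin 2)) 1,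
          ‖(x : EuclideanSpace ℝ (Fin 2))‖ = 1 → h x = x) →
        ∃ g : Fin N → ((Metric.closedBall (0 : EuclideanSpace ℝ (Fin 2)) 1) ≃ₜ
            (Metric.closedBall (0 : EuclideanSpace ℝ (Fin 2)) 1)),
          (∀ i, (∀ x : Metric.closedBall (0 : EuclideanSpace ℝ (Fin 2)) 1,
              ‖(x : EuclideanSpace ℝ (Fin 2))‖ = 1 → g i x = x) ∧
            ∀ x : Metric.closedBall (0 : EuclideanSpace ℝ (Fin 2)) 1,
              dist ((g i x : EuclideanSpace ℝ (Fin 2))) (x : EuclideanSpace ℝ (Fin 2)) < ε) ∧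
          ⇑h = (List.ofFn fun i => ⇑(g i)).foldl (fun acc f => f ∘ acc) id := by
  classical
  by_cases hε2 : 2 < ε
  · -- trivial case: one factor suffices
    refine ⟨1, ?_, ?_⟩
    · have h4 : 0 < 4/ε := by positivity
      linarith
    · intro h hbd
      refine ⟨fun _ => h, fun i => ⟨hbd, ?_⟩, ?_⟩
      · intro x
        have h1 : dist ((h x : E)) ((x:E)) ≤ ‖(h x : E)‖ + ‖(x:E)‖ := by
          rw [dist_eq_norm]; exact norm_sub_le _ _
        have h2 := normD (h x)
        have h3 := normD x
        linarith
      · have hl : (List.ofFn fun _ : Fin 1 => ⇑h) = [⇑h] := by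
          simp [List.ofFn_succ]
        rw [hl]
        simp only [List.foldl_cons, List.foldl_nil]
        exact (Function.comp_id _).symm
  · push_neg at hε2
    set m : ℕ := ⌈1/ε⌉₊ with hmdef
    have hm0 : 0 < m := Nat.ceil_pos.mpr (by positivity)
    have hmR : (0:ℝ) < m := by exact_mod_cast hm0
    have hle_ceil : (1:ℝ)/ε ≤ m := Nat.le_ceil _
    have hminv : 1/(m:ℝ) ≤ ε := by
      rw [div_le_iff₀ hmR]
      have hh : ε * (1/ε) = 1 := by field_simp
      nlinarith
    refine ⟨2*m+2, ?_, ?_⟩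
    · have h1 : (m:ℝ) < 1/ε + 1 := Nat.ceil_lt_add_one (by positivity)
      have h2 : (0:ℝ) < 1/ε := by positivity
      have h3 : 4/ε = 4*(1/ε) := by ring
      push_cast
      nlinarith
    · intro h hbd
      have hbd' : ∀ x : D, ‖(x : E)‖ = 1 → h.symm x = x := by
        intro x hx
        have h1 := congrArg h.symm (hbd x hx)
        rw [Homeomorph.symm_apply_apply] at h1
        exact h1.symm
      obtain ⟨δ, hδ0, hδ⟩ := Metric.uniformContinuous_iff.mp
        (CompactSpace.uniformContinuous_of_continuous h.continuous) (ε/2) (by positivity)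
      set η : ℝ := min (min δ ε) 1 / 4 with hηdef
      have hη0 : 0 < η := by positivity
      have hηδ : η ≤ δ/4 := by
        have h1 := min_le_left (min δ ε) 1
        have h2 := min_le_left δ ε
        rw [hηdef]; linarith
      have hηε : η ≤ ε/4 := by
        have h1 := min_le_left (min δ ε) 1
        have h2 := min_le_right δ ε
        rw [hηdef]; linarith
      have hη14 : η ≤ 1/4 := by
        have h1 := min_le_right (min δ ε) 1
        rw [hηdef]; linarith
      set t : ℝ := 1 - η with htdef
      have ht34 : 3/4 ≤ t := by rw [htdef]; linarith
      have ht0 : 0 < t := by linarith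
      have htlt : t < 1 := by rw [htdef]; linarith
      have ht1 : t ≤ 1 := le_of_lt htlt
      set a : ℝ := ε/4 with hadef
      have ha0 : 0 < a := by positivity
      have ha12 : a ≤ 1/2 := by rw [hadef]; linarith
      set ψ : ℝ → ℝ := fun r => max a (1 - ((1-a)/η) * (1-r)) with hψdef
      have hK0 : 0 ≤ (1-a)/η := by
        apply div_nonneg _ (le_of_lt hη0); linarith
      have ψ_ge : ∀ r, a ≤ ψ r := fun r => le_max_left _ _
      have ψ_le1 : ∀ r, r ≤ 1 → ψ r ≤ 1 := by
        intro r hr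
        apply max_le (by linarith)
        nlinarith
      have ψ_mono : ∀ ⦃r s : ℝ⦄, r ≤ s → ψ r ≤ ψ s := by
        intro r s hrs
        apply max_le_max le_rfl
        nlinarith
      have ψ_one : ψ 1 = 1 := by
        rw [hψdef]
        simp only [sub_self, mul_zero, sub_zero]
        exact max_eq_right (by linarith)
      have ψ_eq_a : ∀ r, r ≤ t → ψ r = a := by
        intro r hr
        apply max_eq_left
        have e1 : (1-a)/η * η = 1-a := by field_simp
        have e2 : η ≤ 1 - r := by rw [htdef] at hr; linarith
        nlinarith [mul_le_mul_of_nonneg_left e2 hK0]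
      have ψ_cont : Continuous ψ := by
        rw [hψdef]
        exact continuous_const.max (continuous_const.sub
          (continuous_const.mul (continuous_const.sub continuous_id)))
      set ν : ℕ → ℝ → ℝ := fun j r => 1 - (min ((j:ℝ)/(m:ℝ)) 1) * (1 - ψ r) with hνdef
      have hs_nonneg : ∀ j : ℕ, 0 ≤ min ((j:ℝ)/(m:ℝ)) 1 := by
        intro j; exact le_min (by positivity) zero_le_one
      have hs_le1 : ∀ j : ℕ, min ((j:ℝ)/(m:ℝ)) 1 ≤ 1 := fun j => min_le_right _ _
      have hνle : ∀ j, ∀ r, 0 ≤ r → r ≤ 1 → ν j r ≤ 1 := by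
        intro j r _ hr1
        have h1 : 0 ≤ min ((j:ℝ)/(m:ℝ)) 1 * (1 - ψ r) :=
          mul_nonneg (hs_nonneg j) (by linarith [ψ_le1 r hr1])
        rw [hνdef]; dsimp only; linarith
      have hνpos : ∀ j, ∀ r, 0 ≤ r → r ≤ 1 → 0 < ν j r := by
        intro j r _ hr1
        have h1 : min ((j:ℝ)/(m:ℝ)) 1 * (1 - ψ r) ≤ 1 * (1-a) :=
          mul_le_mul (hs_le1 j) (by linarith [ψ_ge r]) (by linarith [ψ_le1 r hr1]) zero_le_one
        rw [hνdef]; dsimp only; nlinarith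
      have hνcont : ∀ j, Continuous (ν j) := by
        intro j
        rw [hνdef]
        exact continuous_const.sub (continuous_const.mul (continuous_const.sub ψ_cont))
      have hνmono : ∀ j, ∀ ⦃r s : ℝ⦄, 0 ≤ r → r ≤ s → s ≤ 1 → ν j r ≤ ν j s := by
        intro j r s _ hrs _
        have h1 := ψ_mono hrs
        have h2 := hs_nonneg j
        rw [hνdef]; dsimp only; nlinarith
      have hνone : ∀ j, ν j 1 = 1 := by
        intro j; rw [hνdef]; dsimp only; rw [ψ_one]; ring
      set F : ℕ → (D ≃ₜ D) := fun j =>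
        radialHomeo (ν j) (hνle j) (hνpos j) (hνcont j) (hνmono j) (hνone j) with hFdef
      have hFcoe : ∀ j (z : D), ((F j z : D) : E) = ν j ‖(z:E)‖ • (z:E) := fun j z => rfl
      set k : D ≃ₜ D := alexHomeo h t ht0 ht1 hbd hbd' with hkdef
      have hzmem : ∀ (y : D), ‖(y:E)‖ ≤ t → t⁻¹ • (y:E) ∈ D := by
        intro y hy
        rw [mem_closedBall_zero_iff, norm_smul, Real.norm_eq_abs,
          abs_of_pos (inv_pos.mpr ht0)]
        calc t⁻¹ * ‖(y:E)‖ ≤ t⁻¹ * t :=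
              mul_le_mul_of_nonneg_left hy (le_of_lt (inv_pos.mpr ht0))
          _ = 1 := inv_mul_cancel₀ (ne_of_gt ht0)
      have hkcoe_le : ∀ (y : D), ∀ hy : ‖(y:E)‖ ≤ t,
          (k y : E) = t • ((h ⟨t⁻¹ • (y:E), hzmem y hy⟩ : D) : E) := by
        intro y hy
        exact alexFun_coe_of_le h t ht0 ht1 y hy
      have hkeq_gt : ∀ (y : D), ¬ ‖(y:E)‖ ≤ t → k y = y := by
        intro y hy
        exact Subtype.ext (alexFun_coe_of_gt h t ht0 ht1 y hy)
      have hknorm_le : ∀ (y : D), ∀ hy : ‖(y:E)‖ ≤ t, ‖(k y : E)‖ ≤ t := by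
        intro y hy
        rw [hkcoe_le y hy, norm_smul, Real.norm_eq_abs, abs_of_pos ht0]
        calc t * ‖((h ⟨t⁻¹ • (y:E), hzmem y hy⟩ : D) : E)‖ ≤ t * 1 :=
              mul_le_mul_of_nonneg_left (normD _) (le_of_lt ht0)
          _ = t := mul_one t
      have hkfix : ∀ (y : D), ‖(y:E)‖ = 1 → k y = y := by
        intro y hy
        apply hkeq_gt
        rw [hy]; intro hc; linarith
      -- the chain of homeomorphisms
      set e : ℕ → (D ≃ₜ D) := fun i =>
        if i ≤ m then F i else if i ≤ 2*m+1 then k.trans (F (2*m+1-i)) else h with hedef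
      have he : ∀ i, e i = if i ≤ m then F i
          else if i ≤ 2*m+1 then k.trans (F (2*m+1-i)) else h := fun i => rfl
      have hF0 : ∀ z : D, F 0 z = z := by
        intro z
        apply Subtype.ext
        rw [hFcoe]
        have hh : ν 0 ‖(z:E)‖ = 1 := by
          rw [hνdef]; dsimp only
          rw [Nat.cast_zero, zero_div, min_eq_left zero_le_one]; ring
        rw [hh, one_smul]
      have hFfix : ∀ j (y : D), ‖(y:E)‖ = 1 → F j y = y := by
        intro j y hy
        apply Subtype.ext
        rw [hFcoe, hy, hνone, one_smul]
      have hefix : ∀ i (x : D), ‖(x:E)‖ = 1 → e i x = x := by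
        intro i x hx
        rw [he i]
        split_ifs with h1 h2
        · exact hFfix i x hx
        · rw [Homeomorph.trans_apply, hkfix x hx]
          exact hFfix _ x hx
        · exact hbd x hx
      have hesymmfix : ∀ i (x : D), ‖(x:E)‖ = 1 → (e i).symm x = x := by
        intro i x hx
        have h1 := congrArg (e i).symm (hefix i x hx)
        rw [Homeomorph.symm_apply_apply] at h1
        exact h1.symm
      -- distance between consecutive radial maps
      have hF_dist : ∀ j, j + 1 ≤ m → ∀ z : D,
          dist ((F (j+1) z : D) : E) ((F j z : D) : E) < ε := by
        intro j hj z
        rw [dist_eq_norm, hFcoe, hFcoe, ← sub_smul, norm_smul, Real.norm_eq_abs]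
        set r := ‖(z:E)‖ with hrdef
        have hr0 : 0 ≤ r := norm_nonneg _
        have hr1 : r ≤ 1 := normD z
        have hjm : ((j:ℝ)+1)/(m:ℝ) ≤ 1 := by
          rw [div_le_one hmR]
          exact_mod_cast hj
        have hjm' : (j:ℝ)/(m:ℝ) ≤ 1 := by
          rw [div_le_one hmR]
          have hh : (j:ℕ) ≤ m := by omega
          exact_mod_cast hh
        have hcast : (((j+1:ℕ)):ℝ) = (j:ℝ)+1 := by push_cast; ring
        have hΔ : ν (j+1) r - ν j r = -((1/(m:ℝ)) * (1 - ψ r)) := by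
          rw [hνdef]; dsimp only
          rw [hcast, min_eq_left hjm, min_eq_left hjm']
          field_simp
          ring
        rw [hΔ, abs_neg]
        have hψra := ψ_ge r
        have hψr1 := ψ_le1 r hr1
        have hnn : (0:ℝ) ≤ 1/(m:ℝ) * (1 - ψ r) :=
          mul_nonneg (by positivity) (by linarith)
        rw [abs_of_nonneg hnn]
        have s1 : 1 - ψ r ≤ 1 - a := by linarith
        have s2 : (0:ℝ) ≤ 1/(m:ℝ) := by positivity
        have s3a : 1/(m:ℝ)*(1-ψ r)*r ≤ 1/(m:ℝ)*(1-ψ r) := by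
          nlinarith
        have s3b : 1/(m:ℝ)*(1-ψ r) ≤ 1/(m:ℝ)*(1-a) :=
          mul_le_mul_of_nonneg_left s1 s2
        have s4 : 1/(m:ℝ)*(1-a) ≤ ε*(1-a) :=
          mul_le_mul_of_nonneg_right hminv (by linarith)
        have s5 : ε*(1-a) < ε := by nlinarith
        linarith
      have hFm_norm : ∀ w : D, ‖(w:E)‖ ≤ t → ‖((F m w : D) : E)‖ ≤ a := by
        intro w hw
        rw [hFcoe, norm_smul, Real.norm_eq_abs]
        have hν_m : ν m ‖(w:E)‖ = a := by
          rw [hνdef]; dsimp only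
          rw [div_self (ne_of_gt hmR), min_self, ψ_eq_a _ hw]; ring
        rw [hν_m, abs_of_pos ha0]
        calc a * ‖(w:E)‖ ≤ a * 1 := mul_le_mul_of_nonneg_left (normD w) (le_of_lt ha0)
          _ = a := mul_one a
      -- the key step estimate
      have hstep : ∀ i, i < 2*m+2 → ∀ y : D,
          dist ((e (i+1) y : D) : E) ((e i y : D) : E) < ε := by
        intro i hi y
        by_cases h1 : i < m
        · rw [he i, he (i+1), if_pos (show i ≤ m by omega), if_pos (show i+1 ≤ m by omega)]
          exact hF_dist i (by omega) y
        · by_cases h2 : i = m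
          · subst h2
            rw [he m, he (m+1), if_pos (le_refl m), if_neg (show ¬ m+1 ≤ m by omega),
              if_pos (show m+1 ≤ 2*m+1 by omega)]
            have hidx : 2*m+1-(m+1) = m := by omega
            rw [hidx, Homeomorph.trans_apply]
            by_cases hy : ‖(y:E)‖ ≤ t
            · have n1 : ‖((F m (k y) : D) : E)‖ ≤ a := hFm_norm _ (hknorm_le y hy)
              have n2 : ‖((F m y : D) : E)‖ ≤ a := hFm_norm _ hy
              calc dist ((F m (k y) : D) : E) ((F m y : D) : E)
                  ≤ ‖((F m (k y) : D) : E)‖ + ‖((F m y : D) : E)‖ := by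
                    rw [dist_eq_norm]; exact norm_sub_le _ _
                _ ≤ a + a := add_le_add n1 n2
                _ < ε := by rw [hadef]; linarith
            · rw [hkeq_gt y hy, dist_self]; exact hε
          · by_cases h3 : i ≤ 2*m
            · rw [he i, he (i+1), if_neg (show ¬ i+1 ≤ m by omega),
                if_pos (show i+1 ≤ 2*m+1 by omega), if_neg (show ¬ i ≤ m by omega),
                if_pos (show i ≤ 2*m+1 by omega)]
              have hidx : 2*m+1-i = (2*m-i)+1 := by omega
              have hidx2 : 2*m+1-(i+1) = 2*m-i := by omega
              rw [hidx, hidx2, Homeomorph.trans_apply, Homeomorph.trans_apply, dist_comm]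
              exact hF_dist (2*m-i) (by omega) (k y)
            · have h4 : i = 2*m+1 := by omega
              subst h4
              rw [he (2*m+1), he (2*m+1+1), if_neg (show ¬ 2*m+1+1 ≤ m by omega),
                if_neg (show ¬ 2*m+1+1 ≤ 2*m+1 by omega),
                if_neg (show ¬ 2*m+1 ≤ m by omega),
                if_pos (show 2*m+1 ≤ 2*m+1 by omega)]
              have hidx : 2*m+1-(2*m+1) = 0 := by omega
              rw [hidx, Homeomorph.trans_apply, hF0 (k y)]
              -- goal : dist (h y) (k y) < ε
              by_cases hy : ‖(y:E)‖ ≤ t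
              · set z : D := ⟨t⁻¹ • (y:E), hzmem y hy⟩ with hzd
                have hkc : (k y : E) = t • ((h z : D) : E) := hkcoe_le y hy
                have hyz : dist y z < δ := by
                  rw [Subtype.dist_eq]
                  show dist (y:E) (t⁻¹ • (y:E)) < δ
                  rw [dist_eq_norm]
                  have hsub : (y:E) - t⁻¹ • (y:E) = (1 - t⁻¹) • (y:E) := by
                    rw [sub_smul, one_smul]
                  rw [hsub, norm_smul, Real.norm_eq_abs]
                  have htt : t * t⁻¹ = 1 := mul_inv_cancel₀ (ne_of_gt ht0)
                  have htinv : 1 ≤ t⁻¹ := by nlinarith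
                  rw [abs_of_nonpos (by linarith)]
                  have hb : (t⁻¹ - 1) * ‖(y:E)‖ ≤ (t⁻¹-1)*t :=
                    mul_le_mul_of_nonneg_left hy (by linarith)
                  have hc : (t⁻¹-1)*t = 1 - t := by field_simp
                  have hd : η < δ := by linarith
                  calc -(1-t⁻¹) * ‖(y:E)‖ = (t⁻¹-1) * ‖(y:E)‖ := by ring
                    _ ≤ 1 - t := by rw [← hc]; exact hb
                    _ = η := by rw [htdef]; ring
                    _ < δ := hd
                have h2' : dist ((h y : D) : E) ((h z : D) : E) < ε/2 := by
                  have hh := hδ hyz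
                  rwa [Subtype.dist_eq] at hh
                have h3' : dist ((h z : D) : E) (t • ((h z : D) : E)) ≤ η := by
                  rw [dist_eq_norm]
                  have hsub : ((h z : D) : E) - t • ((h z : D) : E)
                      = (1-t) • ((h z : D) : E) := by
                    module
                  rw [hsub, norm_smul, Real.norm_eq_abs, abs_of_nonneg (by linarith)]
                  calc (1-t) * ‖((h z : D) : E)‖ ≤ (1-t) * 1 :=
                        mul_le_mul_of_nonneg_left (normD _) (by linarith)
                    _ = η := by rw [htdef]; ring
                calc dist ((h y : D) : E) ((k y : D) : E)
                    ≤ dist ((h y : D) : E) ((h z : D) : E)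
                      + dist ((h z : D) : E) ((k y : D) : E) := dist_triangle _ _ _
                  _ < ε/2 + η := by
                      rw [hkc]
                      exact add_lt_add_of_lt_of_le h2' h3'
                  _ < ε := by linarith
              · rw [hkeq_gt y hy]
                have hyt : t < ‖(y:E)‖ := not_le.mp hy
                have hy0 : (0:ℝ) < ‖(y:E)‖ := by linarith
                have hwmem : ‖(y:E)‖⁻¹ • (y:E) ∈ D := by
                  rw [mem_closedBall_zero_iff, norm_smul, Real.norm_eq_abs,
                    abs_of_pos (inv_pos.mpr hy0), inv_mul_cancel₀ (ne_of_gt hy0)]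
                set w : D := ⟨‖(y:E)‖⁻¹ • (y:E), hwmem⟩ with hwd
                have hw1 : ‖(w:E)‖ = 1 := by
                  show ‖‖(y:E)‖⁻¹ • (y:E)‖ = 1
                  rw [norm_smul, Real.norm_eq_abs, abs_of_pos (inv_pos.mpr hy0),
                    inv_mul_cancel₀ (ne_of_gt hy0)]
                have hdyw_le : dist (y:E) ((w:D):E) ≤ η := by
                  show dist (y:E) (‖(y:E)‖⁻¹ • (y:E)) ≤ η
                  rw [dist_eq_norm]
                  have hsub : (y:E) - ‖(y:E)‖⁻¹ • (y:E) = (1 - ‖(y:E)‖⁻¹) • (y:E) := by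
                    rw [sub_smul, one_smul]
                  rw [hsub, norm_smul, Real.norm_eq_abs]
                  have hyy : ‖(y:E)‖ * ‖(y:E)‖⁻¹ = 1 := mul_inv_cancel₀ (ne_of_gt hy0)
                  have hy1' : ‖(y:E)‖ ≤ 1 := normD y
                  have hi1 : 1 ≤ ‖(y:E)‖⁻¹ := by nlinarith
                  rw [abs_of_nonpos (by linarith)]
                  have hcc : -(1 - ‖(y:E)‖⁻¹) * ‖(y:E)‖ = 1 - ‖(y:E)‖ := by
                    field_simp
                    ring
                  rw [hcc]
                  rw [htdef] at hyt
                  linarith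
                have hdyw : dist y w < δ := by
                  rw [Subtype.dist_eq]
                  calc dist (y:E) ((w:D):E) ≤ η := hdyw_le
                    _ < δ := by linarith
                have h2' : dist ((h y : D) : E) ((h w : D) : E) < ε/2 := by
                  have hh := hδ hdyw
                  rwa [Subtype.dist_eq] at hh
                have h3' : h w = w := hbd w hw1
                calc dist ((h y : D) : E) ((y:D) : E)
                    ≤ dist ((h y : D) : E) ((h w : D) : E)
                      + dist ((h w : D) : E) ((y:D):E) := dist_triangle _ _ _
                  _ ≤ ε/2 + η := by
                      apply add_le_add (le_of_lt h2')
                      rw [h3', dist_comm]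
                      exact hdyw_le
                  _ < ε := by linarith
      -- assemble
      refine ⟨fun i => (e i.val).symm.trans (e (i.val+1)), fun i => ⟨?_, ?_⟩, ?_⟩
      · intro x hx
        rw [Homeomorph.trans_apply, hesymmfix i.val x hx]
        exact hefix _ x hx
      · intro x
        rw [Homeomorph.trans_apply]
        have hy : e i.val ((e i.val).symm x) = x := Homeomorph.apply_symm_apply _ _
        have hs := hstep i.val i.isLt ((e i.val).symm x)
        rw [hy] at hs
        exact hs
      · have htel : ∀ n : ℕ,
            (List.ofFn fun i : Fin n => ⇑((e i.val).symm.trans (e (i.val+1)))).foldl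
              (fun acc f => f ∘ acc) id = ⇑(e n) ∘ ⇑(e 0).symm := by
          intro n
          induction n with
          | zero =>
            simp only [List.ofFn_zero, List.foldl_nil]
            funext x
            simp only [Function.comp_apply, Homeomorph.apply_symm_apply, id_eq]
          | succ n ih =>
            rw [List.ofFn_succ', List.concat_eq_append, List.foldl_concat]
            have hcast : (fun i : Fin n =>
                ⇑((e (i.castSucc).val).symm.trans (e ((i.castSucc).val+1))))
                = fun i : Fin n => ⇑((e i.val).symm.trans (e (i.val+1))) := rfl
            rw [hcast, ih]
            funext x
            simp only [Function.comp_apply, Homeomorph.trans_apply, Fin.val_last]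
            rw [Homeomorph.symm_apply_apply]
        rw [htel (2*m+2)]
        have heN : e (2*m+2) = h := by
          rw [he (2*m+2), if_neg (show ¬ 2*m+2 ≤ m by omega),
            if_neg (show ¬ 2*m+2 ≤ 2*m+1 by omega)]
        have he0 : ∀ x : D, e 0 x = x := by
          intro x
          rw [he 0, if_pos (Nat.zero_le m)]
          exact hF0 x
        have he0s : ∀ x : D, (e 0).symm x = x := by
          intro x
          have h1 := congrArg (e 0).symm (he0 x)
          rw [Homeomorph.symm_apply_apply] at h1
          exact h1.symm
        funext x
        simp only [Function.comp_apply]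
        rw [he0s x, heN]
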